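/- Let π : X → Y be a factor map of minimal systems with Y doubly minimal, and let (y₀,x₁) ∈ Y×X with y₁ = π(x₁) not on the orbit of y₀. Then the orbit closure of (y₀,x₁) under the product homeomorphism is all of Y×X. -/

import Mathlib

/-- The group of self-homeomorphisms under composition, so that `T ^ n` (`n : ℤ`)
denotes the `n`-th iterate of `T`. -/
instance Homeomorph.instGroupOld {X : Type*} [TopologicalSpace X] : Group (X ≃ₜ X) where
  mul f g := g.trans f
  one := Homeomorph.refl X
  inv := Homeomorph.symm
  mul_assoc _ _ _ := Homeomorph.ext fun _ => rfl
  one_mul _ := Homeomorph.ext fun _ => rfl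
  mul_one _ := Homeomorph.ext fun _ => rfl
  inv_mul_cancel f := Homeomorph.ext fun x => f.symm_apply_apply x

/-- The orbit closure of a point under a homeomorphism. -/
def orbitCl {X : Type*} [TopologicalSpace X] (T : X ≃ₜ X) (p : X) : Set X :=
  closure {q | ∃ n : ℤ, (T ^ n) p = q}

/-- A (minimal) dynamical system: every orbit closure is everything. -/
def IsMinimalSys {X : Type*} [TopologicalSpace X] (T : X ≃ₜ X) : Prop :=
  ∀ x : X, orbitCl T x = Set.univ

/-- Totally minimal: every nonzero power is minimal. -/
def IsTotallyMinimal {X : Type*} [TopologicalSpace X] (T : X ≃ₜ X) : Prop :=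
  ∀ n : ℤ, n ≠ 0 → IsMinimalSys (T ^ n)

/-- The graph Γ_n = {(T^n x, x) : x ∈ X}. -/
def graphPow {X : Type*} [TopologicalSpace X] (T : X ≃ₜ X) (n : ℤ) : Set (X × X) :=
  {p | ∃ x : X, p = ((T ^ n) x, x)}

/-- POD: totally minimal and for distinct u, v some graph Γ_n (n ≠ 0) lies in the
orbit closure of (u, v) under T × T. -/
def IsPOD {X : Type*} [TopologicalSpace X] (T : X ≃ₜ X) : Prop :=
  IsMinimalSys T ∧ IsTotallyMinimal T ∧
    ∀ u v : X, u ≠ v → ∃ n : ℤ, n ≠ 0 ∧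
      graphPow T n ⊆ orbitCl (T.prodCongr T) (u, v)

/-- Doubly minimal: minimal, and every orbit closure of T × T is either everything
or a graph Γ_m. -/
def IsDoublyMinimal {X : Type*} [TopologicalSpace X] (T : X ≃ₜ X) : Prop :=
  IsMinimalSys T ∧
    ∀ p : X × X, orbitCl (T.prodCongr T) p = Set.univ ∨
      ∃ m : ℤ, orbitCl (T.prodCongr T) p = graphPow T m

/-- A factor map: continuous equivariant surjection. -/
def IsFactorMap {X Y : Type*} [TopologicalSpace X] [TopologicalSpace Y]
    (T : X ≃ₜ X) (S : Y ≃ₜ Y) (π : X → Y) : Prop :=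
  Continuous π ∧ Function.Surjective π ∧ ∀ x, π (T x) = S (π x)

/-- Disjointness: the only closed invariant subset of the product projecting
onto both coordinates is the whole product. -/
def SysDisjoint {X Y : Type*} [TopologicalSpace X] [TopologicalSpace Y]
    (T : X ≃ₜ X) (S : Y ≃ₜ Y) : Prop :=
  ∀ M : Set (X × Y), IsClosed M → (T.prodCongr S) '' M = M →
    Prod.fst '' M = Set.univ → Prod.snd '' M = Set.univ → M = Set.univ

/-- A recurrent point: in the closure of its forward orbit with positive times. -/
def IsRecurrentPt {X : Type*} [TopologicalSpace X] (T : X ≃ₜ X) (x : X) : Prop :=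
  x ∈ closure {q | ∃ n : ℕ, 1 ≤ n ∧ (T ^ n) x = q}

/-- A proximal pair: the orbits come arbitrarily close together. -/
def IsProximal {X : Type*} [PseudoMetricSpace X] (T : X ≃ₜ X) (x x' : X) : Prop :=
  ∀ ε > 0, ∃ n : ℤ, dist ((T ^ n) x) ((T ^ n) x') < ε

/-- A distal point: proximal only to itself. -/
def IsDistalPt {X : Type*} [PseudoMetricSpace X] (T : X ≃ₜ X) (x : X) : Prop :=
  ∀ x', IsProximal T x x' → x' = x

/-- A minimal subset: nonempty, closed, invariant, with all orbits dense in it. -/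
def IsMinimalSubset {X : Type*} [TopologicalSpace X] (T : X ≃ₜ X) (M : Set X) : Prop :=
  M.Nonempty ∧ IsClosed M ∧ (T : X ≃ₜ X) '' M = M ∧
    ∀ p ∈ M, M ⊆ closure {q | ∃ n : ℤ, (T ^ n) p = q}

/-- Topological transitivity. -/
def IsTopTransitive {X : Type*} [TopologicalSpace X] (T : X ≃ₜ X) : Prop :=
  ∀ U V : Set X, IsOpen U → IsOpen V → U.Nonempty → V.Nonempty →
    ∃ n : ℤ, ((T ^ n) '' U ∩ V).Nonempty

/-- Weak mixing: the product system is topologically transitive. -/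
def IsWeaklyMixing {X : Type*} [TopologicalSpace X] (T : X ≃ₜ X) : Prop :=
  IsTopTransitive (T.prodCongr T)


section Aux

variable {A B : Type*} [TopologicalSpace A] [TopologicalSpace B]

lemma Homeomorph.mul_apply' (f g : A ≃ₜ A) (x : A) : (f * g) x = f (g x) := rfl

lemma Homeomorph.one_apply' (x : A) : (1 : A ≃ₜ A) x = x := rfl

lemma zpow_comm_apply (S : A ≃ₜ A) (n k : ℤ) (z : A) :
    (S ^ n) ((S ^ k) z) = (S ^ k) ((S ^ n) z) := by
  have hc : S ^ n * S ^ k = S ^ k * S ^ n := by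
    rw [← zpow_add, ← zpow_add, add_comm]
  calc (S ^ n) ((S ^ k) z) = (S ^ n * S ^ k) z := rfl
    _ = (S ^ k * S ^ n) z := by rw [hc]
    _ = (S ^ k) ((S ^ n) z) := rfl

lemma zpow_neg_apply_zpow (S : A ≃ₜ A) (m : ℤ) (y : A) :
    (S ^ (-m)) ((S ^ m) y) = y := by
  calc (S ^ (-m)) ((S ^ m) y) = (S ^ (-m) * S ^ m) y := rfl
    _ = y := by rw [← zpow_add, neg_add_cancel, zpow_zero]; rfl

/-- `prodCongr` as a monoid hom. -/
def prodCongrHom : (A ≃ₜ A) × (B ≃ₜ B) →* ((A × B) ≃ₜ (A × B)) where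
  toFun p := p.1.prodCongr p.2
  map_one' := Homeomorph.ext fun _ => rfl
  map_mul' _ _ := Homeomorph.ext fun _ => rfl

lemma prodCongr_zpow (S : A ≃ₜ A) (T : B ≃ₜ B) (n : ℤ) :
    (S.prodCongr T) ^ n = (S ^ n).prodCongr (T ^ n) := by
  have h1 : S.prodCongr T = prodCongrHom (S, T) := rfl
  rw [h1, ← map_zpow]
  have h2 : (S, T) ^ n = (S ^ n, T ^ n) := Prod.ext (map_zpow (MonoidHom.fst _ _) (S, T) n) (map_zpow (MonoidHom.snd _ _) (S, T) n)
  rw [h2]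
  rfl

lemma prodCongr_zpow_apply (S : A ≃ₜ A) (T : B ≃ₜ B) (n : ℤ) (p : A × B) :
    ((S.prodCongr T) ^ n) p = ((S ^ n) p.1, (T ^ n) p.2) := by
  rw [prodCongr_zpow]; rfl

lemma orbitCl_zpow_mem (F : A ≃ₜ A) (p q : A) (k : ℤ) (hq : q ∈ orbitCl F p) :
    (F ^ k) q ∈ orbitCl F p := by
  have himg : (F ^ k) '' {r | ∃ n : ℤ, (F ^ n) p = r} ⊆ {r | ∃ n : ℤ, (F ^ n) p = r} := by
    rintro _ ⟨_, ⟨n, rfl⟩, rfl⟩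
    exact ⟨k + n, by rw [zpow_add]; rfl⟩
  exact closure_mono himg
    (image_closure_subset_closure_image (F ^ k).continuous ⟨q, hq, rfl⟩)

end Aux

theorem offOrbit_orbitCl_eq_univ {X Y : Type*} [MetricSpace X] [CompactSpace X] [MetricSpace Y] [CompactSpace Y]
    (T : X ≃ₜ X) (S : Y ≃ₜ Y) (π : X → Y) (hπ : IsFactorMap T S π)
    (hT : IsMinimalSys T) (hS : IsDoublyMinimal S)
    (y₀ : Y) (x₁ : X) (h : ¬ ∃ n : ℤ, (S ^ n) y₀ = π x₁) :
    orbitCl (S.prodCongr T) (y₀, x₁) = Set.univ := by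
  obtain ⟨hπc, hπs, hπe⟩ := hπ
  -- equivariance for the inverse
  have hinv : ∀ x : X, π (T⁻¹ x) = S⁻¹ (π x) := by
    intro x
    apply S.injective
    have h1 : T (T⁻¹ x) = x := by
      calc T (T⁻¹ x) = (T * T⁻¹) x := rfl
        _ = x := by rw [mul_inv_cancel]; rfl
    have h2 : S (S⁻¹ (π x)) = π x := by
      calc S (S⁻¹ (π x)) = (S * S⁻¹) (π x) := rfl
        _ = π x := by rw [mul_inv_cancel]; rfl
    rw [h2, ← hπe, h1]
  -- equivariance for all integer powers
  have hpow : ∀ (n : ℤ) (x : X), π ((T ^ n) x) = (S ^ n) (π x) := by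
    intro n
    induction n using Int.induction_on with
    | zero => intro x; rw [zpow_zero, zpow_zero]; rfl
    | succ k ih =>
        intro x
        rw [zpow_add_one, zpow_add_one]
        calc π ((T ^ (k : ℤ) * T) x) = π ((T ^ (k : ℤ)) (T x)) := rfl
          _ = (S ^ (k : ℤ)) (π (T x)) := ih (T x)
          _ = (S ^ (k : ℤ)) (S (π x)) := by rw [hπe]
          _ = (S ^ (k : ℤ) * S) (π x) := rfl
    | pred k ih =>
        intro x
        rw [zpow_sub_one, zpow_sub_one]
        calc π ((T ^ (-k : ℤ) * T⁻¹) x) = π ((T ^ (-k : ℤ)) (T⁻¹ x)) := rfl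
          _ = (S ^ (-k : ℤ)) (π (T⁻¹ x)) := ih (T⁻¹ x)
          _ = (S ^ (-k : ℤ)) (S⁻¹ (π x)) := by rw [hinv]
          _ = (S ^ (-k : ℤ) * S⁻¹) (π x) := rfl
  set F := S.prodCongr T with hF
  set W := orbitCl F (y₀, x₁) with hWdef
  have hWclosed : IsClosed W := isClosed_closure
  have hmapcont : Continuous (fun p : Y × X => (p.1, π p.2)) :=
    continuous_fst.prodMk (hπc.comp continuous_snd)
  set E := (fun p : Y × X => (p.1, π p.2)) '' W with hEdef
  have hEclosed : IsClosed E := (hWclosed.isCompact.image hmapcont).isClosed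
  -- the orbit of (y₀, π x₁) under S × S lies in E
  have horb : {q : Y × Y | ∃ n : ℤ, ((S.prodCongr S) ^ n) (y₀, π x₁) = q} ⊆ E := by
    rintro _ ⟨n, rfl⟩
    refine ⟨(F ^ n) (y₀, x₁), subset_closure ⟨n, rfl⟩, ?_⟩
    rw [hF, prodCongr_zpow_apply S T n (y₀, x₁), prodCongr_zpow_apply S S n (y₀, π x₁)]
    exact Prod.ext rfl (hpow n x₁)
  -- by double minimality, the orbit closure of (y₀, π x₁) is everything
  have hYY : orbitCl (S.prodCongr S) (y₀, π x₁) = Set.univ := by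
    rcases hS.2 (y₀, π x₁) with h1 | ⟨m, hm⟩
    · exact h1
    · exfalso
      have hmem : (y₀, π x₁) ∈ orbitCl (S.prodCongr S) (y₀, π x₁) :=
        subset_closure ⟨0, by rw [zpow_zero]; rfl⟩
      rw [hm] at hmem
      obtain ⟨y, hy⟩ := hmem
      have hy1 : y₀ = (S ^ m) y := congrArg Prod.fst hy
      have hy2 : π x₁ = y := congrArg Prod.snd hy
      exact h ⟨-m, by rw [hy1, zpow_neg_apply_zpow, ← hy2]⟩
  have hEuniv : E = Set.univ :=
    Set.eq_univ_of_univ_subset (hYY ▸ closure_minimal horb hEclosed)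
  -- every point ((S ^ n) (π x), x) lies in W
  have hgraph : ∀ (n : ℤ) (x : X), ((S ^ n) (π x), x) ∈ W := by
    intro n x
    have hmem : ((S ^ n) y₀, y₀) ∈ E := by rw [hEuniv]; trivial
    obtain ⟨p, hpW, hp⟩ := hmem
    have hp1 : p.1 = (S ^ n) y₀ := congrArg Prod.fst hp
    have hp2 : π p.2 = y₀ := congrArg Prod.snd hp
    have hb : ((S ^ n) (π p.2), p.2) ∈ W := by
      rw [hp2, ← hp1]; exact hpW
    set f : X → Y × X := fun z => ((S ^ n) (π z), z) with hf
    have hfc : Continuous f := ((S ^ n).continuous.comp hπc).prodMk continuous_id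
    have himg : f '' {q | ∃ k : ℤ, (T ^ k) p.2 = q} ⊆ W := by
      rintro _ ⟨_, ⟨k, rfl⟩, rfl⟩
      have hfk : f ((T ^ k) p.2) = (F ^ k) ((S ^ n) (π p.2), p.2) := by
        rw [hF, prodCongr_zpow_apply S T k]
        refine Prod.ext ?_ rfl
        simp only [hf]
        rw [hpow k p.2]
        exact zpow_comm_apply S n k (π p.2)
      rw [hfk]
      exact orbitCl_zpow_mem F (y₀, x₁) _ k hb
    have hd : x ∈ closure {q | ∃ k : ℤ, (T ^ k) p.2 = q} := by
      have hu : x ∈ orbitCl T p.2 := by rw [hT p.2]; trivial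
      exact hu
    have hfx : f x ∈ closure (f '' {q | ∃ k : ℤ, (T ^ k) p.2 = q}) :=
      image_closure_subset_closure_image hfc ⟨x, hd, rfl⟩
    exact closure_minimal himg hWclosed hfx
  -- conclude
  apply Set.eq_univ_of_forall
  rintro ⟨y, x⟩
  set g : Y → Y × X := fun z => (z, x) with hg
  have hgc : Continuous g := continuous_id.prodMk continuous_const
  have hgo : g '' {q | ∃ k : ℤ, (S ^ k) (π x) = q} ⊆ W := by
    rintro _ ⟨_, ⟨k, rfl⟩, rfl⟩
    exact hgraph k x
  have hd : y ∈ closure {q | ∃ k : ℤ, (S ^ k) (π x) = q} := by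
    have hu : y ∈ orbitCl S (π x) := by rw [hS.1 (π x)]; trivial
    exact hu
  have hgy : g y ∈ closure (g '' {q | ∃ k : ℤ, (S ^ k) (π x) = q}) :=
    image_closure_subset_closure_image hgc ⟨y, hd, rfl⟩
  exact closure_minimal hgo hWclosed hgy
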